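/- For the 3D compact 27-point scheme: if u(x,y,z) is any polynomial of total degree ≤ 3, then −(25/(6h²)) u(P) + (5/(12h²)) ∑_{|r|+|s|+|t|=1} u(P + h(r,s,t)) + (1/(8h²)) ∑_{|r|+|s|+|t|=2} u(P + h(r,s,t)) + (1/(48h²)) ∑_{|r|+|s|+|t|=3} u(P + h(r,s,t)) = Δu(P) for all h > 0 and all points P ∈ ℝ³, where offsets (r,s,t) range over {−1,0,1}³. -/

import Mathlib

lemma deriv2_sum' {ι : Type*} (S : Finset ι) (A : ι → ℝ) (n : ι → ℕ) (x : ℝ) :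
    deriv (fun s => deriv (fun t : ℝ => ∑ v ∈ S, A v * t ^ n v) s) x
      = ∑ v ∈ S, A v * (n v * ((n v - 1) * x ^ (n v - 2))) := by
  have h1 : (fun s : ℝ => deriv (fun t : ℝ => ∑ v ∈ S, A v * t ^ n v) s)
      = fun s => ∑ v ∈ S, (A v * n v) * s ^ (n v - 1) := by
    funext s
    rw [deriv_fun_sum (fun i _ => ((differentiableAt_pow _).const_mul _))]
    refine Finset.sum_congr rfl fun v _ => ?_
    rw [deriv_const_mul _ (differentiableAt_pow _), deriv_pow_field]; ring
  rw [h1, deriv_fun_sum (fun i _ => ((differentiableAt_pow _).const_mul _))]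
  refine Finset.sum_congr rfl fun v _ => ?_
  rw [deriv_const_mul _ (differentiableAt_pow _), deriv_pow_field, Nat.sub_sub]
  set m := n v with hm
  clear_value m
  cases m with
  | zero => simp
  | succ k => simp only [Nat.succ_sub_one]; push_cast; ring

set_option maxHeartbeats 4000000 in
/-- The 3D compact 27-point scheme reproduces the Laplacian exactly on
polynomials of total degree at most 3. -/
theorem twentyseven_point_exact_on_cubics (p : MvPolynomial (Fin 3) ℝ)
    (hp : p.totalDegree ≤ 3) (h : ℝ) (hh : 0 < h) (x y z : ℝ) :
    let u : ℝ → ℝ → ℝ → ℝ := fun a b c => MvPolynomial.eval ![a, b, c] p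
    let O : Finset (ℤ × ℤ × ℤ) :=
      ({-1, 0, 1} : Finset ℤ) ×ˢ ({-1, 0, 1} : Finset ℤ) ×ˢ ({-1, 0, 1} : Finset ℤ)
    (-(25 / (6 * h ^ 2)) * u x y z
        + (5 / (12 * h ^ 2)) *
            ∑ q ∈ O.filter (fun q => |q.1| + |q.2.1| + |q.2.2| = 1),
              u (x + h * q.1) (y + h * q.2.1) (z + h * q.2.2)
        + (1 / (8 * h ^ 2)) *
            ∑ q ∈ O.filter (fun q => |q.1| + |q.2.1| + |q.2.2| = 2),
              u (x + h * q.1) (y + h * q.2.1) (z + h * q.2.2)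
        + (1 / (48 * h ^ 2)) *
            ∑ q ∈ O.filter (fun q => |q.1| + |q.2.1| + |q.2.2| = 3),
              u (x + h * q.1) (y + h * q.2.1) (z + h * q.2.2)
      = deriv (fun s => deriv (fun t => u t y z) s) x
          + deriv (fun s => deriv (fun t => u x t z) s) y
          + deriv (fun s => deriv (fun t => u x y t) s) z ) := by
  intro u O
  have hne : h ≠ 0 := ne_of_gt hh
  have hu : ∀ a b c : ℝ, u a b c
      = ∑ v ∈ p.support, MvPolynomial.coeff v p * (a ^ v 0 * b ^ v 1 * c ^ v 2) := by
    intro a b c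
    show MvPolynomial.eval ![a, b, c] p = _
    rw [MvPolynomial.eval_eq']
    refine Finset.sum_congr rfl fun v _ => ?_
    rw [Fin.prod_univ_three]
    simp
  have hdeg : ∀ v ∈ p.support, v 0 + v 1 + v 2 ≤ 3 := by
    intro v hv
    have h1 := MvPolynomial.le_totalDegree hv
    have h2 : (v.sum fun _ e => e) = v 0 + v 1 + v 2 := by
      rw [Finsupp.sum_fintype _ _ (fun _ => rfl), Fin.sum_univ_three]
    omega
  have hx : deriv (fun s => deriv (fun t => u t y z) s) x
      = ∑ v ∈ p.support, (MvPolynomial.coeff v p * (y ^ v 1 * z ^ v 2))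
          * (v 0 * (((v 0 : ℝ) - 1) * x ^ (v 0 - 2))) := by
    have e : (fun t : ℝ => u t y z)
        = fun t => ∑ v ∈ p.support, (MvPolynomial.coeff v p * (y ^ v 1 * z ^ v 2)) * t ^ v 0 := by
      funext t; rw [hu]; exact Finset.sum_congr rfl fun v _ => by ring
    rw [e, deriv2_sum']
  have hy : deriv (fun s => deriv (fun t => u x t z) s) y
      = ∑ v ∈ p.support, (MvPolynomial.coeff v p * (x ^ v 0 * z ^ v 2))
          * (v 1 * (((v 1 : ℝ) - 1) * y ^ (v 1 - 2))) := by
    have e : (fun t : ℝ => u x t z)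
        = fun t => ∑ v ∈ p.support, (MvPolynomial.coeff v p * (x ^ v 0 * z ^ v 2)) * t ^ v 1 := by
      funext t; rw [hu]; exact Finset.sum_congr rfl fun v _ => by ring
    rw [e, deriv2_sum']
  have hz : deriv (fun s => deriv (fun t => u x y t) s) z
      = ∑ v ∈ p.support, (MvPolynomial.coeff v p * (x ^ v 0 * y ^ v 1))
          * (v 2 * (((v 2 : ℝ) - 1) * z ^ (v 2 - 2))) := by
    have e : (fun t : ℝ => u x y t)
        = fun t => ∑ v ∈ p.support, (MvPolynomial.coeff v p * (x ^ v 0 * y ^ v 1)) * t ^ v 2 := by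
      funext t; rw [hu]; exact Finset.sum_congr rfl fun v _ => by ring
    rw [e, deriv2_sum']
  rw [hx, hy, hz]
  rw [show O.filter (fun q => |q.1| + |q.2.1| + |q.2.2| = 1)
      = ({(1,0,0), (-1,0,0), (0,1,0), (0,-1,0), (0,0,1), (0,0,-1)} : Finset (ℤ×ℤ×ℤ)) from by
    decide]
  rw [show O.filter (fun q => |q.1| + |q.2.1| + |q.2.2| = 2)
      = ({(1,1,0), (1,-1,0), (-1,1,0), (-1,-1,0), (1,0,1), (1,0,-1), (-1,0,1), (-1,0,-1),
          (0,1,1), (0,1,-1), (0,-1,1), (0,-1,-1)} : Finset (ℤ×ℤ×ℤ)) from by decide]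
  rw [show O.filter (fun q => |q.1| + |q.2.1| + |q.2.2| = 3)
      = ({(1,1,1), (1,1,-1), (1,-1,1), (1,-1,-1), (-1,1,1), (-1,1,-1), (-1,-1,1),
          (-1,-1,-1)} : Finset (ℤ×ℤ×ℤ)) from by decide]
  simp only [Finset.sum_insert, Finset.mem_insert, Finset.sum_singleton, Finset.mem_singleton,
    Prod.mk.injEq, Int.cast_one, Int.cast_neg, Int.cast_zero, mul_zero, mul_one, add_zero,
    mul_neg, reduceCtorEq, and_false, false_and, and_self, or_self, or_false, false_or,
    not_false_eq_true, neg_neg, one_ne_zero]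
  simp only [hu]
  rw [← sub_eq_add_neg x h, ← sub_eq_add_neg y h, ← sub_eq_add_neg z h]
  simp only [Finset.mul_sum, ← Finset.sum_add_distrib]
  refine Finset.sum_congr rfl fun v hv => ?_
  have hd := hdeg v hv
  generalize MvPolynomial.coeff v p = A
  generalize ha' : v 0 = a at hd ⊢
  generalize hb' : v 1 = b at hd ⊢
  generalize hc' : v 2 = c at hd ⊢
  have ha : a ≤ 3 := by omega
  have hb : b ≤ 3 := by omega
  have hc : c ≤ 3 := by omega
  interval_cases a <;> interval_cases b <;> interval_cases c <;> first
    | omega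
    | (norm_num; field_simp; ring)
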